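/- Let k and v be positive integers with v > k, let φ₀ be a real number, and let b, e, B₀ : ℝ → ℝ be continuously differentiable with b(φ₀) > 0 and e(φ₀) ≠ 0 and B₀(φ₀) ≠ 0. Suppose B₀′(φ) = (φ − φ₀)^{2k−1} b(φ) for all φ (so φ₀ is a local minimum of B₀), and set d(φ) = (φ − φ₀)^v e(φ). Then there exists δ > 0 such that the precession term satisfies T(φ) > 0 for all φ with 0 < |φ − φ₀| < δ. If instead b(φ₀) < 0 (so φ₀ is a local maximum of B₀), then there exists δ > 0 such that T(φ) < 0 for all φ with 0 < |φ − φ₀| < δ. -/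

import Mathlib

/-- If `B₀′(φ) = (φ − φ₀)^{2k−1} b(φ)` with `v > k` positive integers,
`e(φ₀) ≠ 0`, `B₀(φ₀) ≠ 0`, and `d(φ) = (φ − φ₀)^v e(φ)` (b, e, B₀ C¹), then:
if `b(φ₀) > 0` (local minimum of B₀) the precession term
`T(φ) = (1/4) d/dφ [B₀² d²/B₀′](φ)` is positive on a punctured neighborhood of φ₀;
if `b(φ₀) < 0` (local maximum) it is negative on a punctured neighborhood of φ₀. -/
theorem precession_term_sign_near_extremum
    (k v : ℕ) (hk : 0 < k) (hv : 0 < v) (hkv : k < v)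
    (φ₀ : ℝ) (b e B₀ : ℝ → ℝ)
    (hb : ContDiff ℝ 1 b) (he : ContDiff ℝ 1 e) (hB₀ : ContDiff ℝ 1 B₀)
    (heφ₀ : e φ₀ ≠ 0) (hB₀φ₀ : B₀ φ₀ ≠ 0)
    (hB₀' : ∀ φ : ℝ, deriv B₀ φ = (φ - φ₀) ^ (2 * k - 1) * b φ)
    (d : ℝ → ℝ) (hd : ∀ φ : ℝ, d φ = (φ - φ₀) ^ v * e φ)
    (T : ℝ → ℝ)
    (hT : ∀ ψ : ℝ, T ψ =
      (1/4) * deriv (fun x : ℝ => (B₀ x) ^ 2 * (d x) ^ 2 / deriv B₀ x) ψ) :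
    (0 < b φ₀ → ∃ δ > (0 : ℝ), ∀ φ : ℝ,
      0 < |φ - φ₀| → |φ - φ₀| < δ → 0 < T φ) ∧
    (b φ₀ < 0 → ∃ δ > (0 : ℝ), ∀ φ : ℝ,
      0 < |φ - φ₀| → |φ - φ₀| < δ → T φ < 0) := by
  have key : b φ₀ ≠ 0 → ∃ δ > (0 : ℝ), ∀ φ : ℝ,
      0 < |φ - φ₀| → |φ - φ₀| < δ → 0 < b φ₀ * T φ := by
    intro hbφ₀
    set m : ℕ := 2 * (v - k) + 1 with hm
    have hdB : Continuous (deriv B₀) := hB₀.continuous_deriv le_rfl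
    have hde : Continuous (deriv e) := he.continuous_deriv le_rfl
    have hdb : Continuous (deriv b) := hb.continuous_deriv le_rfl
    have hbc : Continuous b := hb.continuous
    have hec : Continuous e := he.continuous
    have hBc : Continuous B₀ := hB₀.continuous
    set g : ℝ → ℝ := fun x => B₀ x ^ 2 * e x ^ 2 / b x with hg
    set Dg : ℝ → ℝ := fun x =>
      (((2 : ℝ) * B₀ x ^ 1 * deriv B₀ x * e x ^ 2
          + B₀ x ^ 2 * ((2 : ℝ) * e x ^ 1 * deriv e x)) * b x
        - B₀ x ^ 2 * e x ^ 2 * deriv b x) / (b x) ^ 2 with hDg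
    set P : ℝ → ℝ := fun x => (m : ℝ) * g x + (x - φ₀) * Dg x with hP
    -- pointwise identity on {b ≠ 0}
    have hFeq : ∀ x : ℝ, b x ≠ 0 →
        B₀ x ^ 2 * d x ^ 2 / deriv B₀ x = (x - φ₀) ^ m * g x := by
      intro x hbx
      rw [hd, hB₀']
      rcases eq_or_ne x φ₀ with h | h
      · subst h
        simp [hg, sub_self, zero_pow (by omega : v ≠ 0), zero_pow (by omega : m ≠ 0)]
      · have hx : x - φ₀ ≠ 0 := sub_ne_zero.mpr h
        have hpow : (x - φ₀) ^ (2 * v) = (x - φ₀) ^ (2 * k - 1) * (x - φ₀) ^ m := by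
          rw [← pow_add]; congr 1; omega
        simp only [hg]
        rw [mul_pow, ← pow_mul]
        field_simp
        rw [mul_comm v 2, hpow]
        ring
    have hOpen : IsOpen {x : ℝ | b x ≠ 0} := isOpen_ne.preimage hbc
    -- derivative formula locally
    have hderiv : ∀ ψ : ℝ, b ψ ≠ 0 →
        deriv (fun x : ℝ => B₀ x ^ 2 * d x ^ 2 / deriv B₀ x) ψ
          = (ψ - φ₀) ^ (m - 1) * P ψ := by
      intro ψ hbψ
      have hev : (fun x : ℝ => B₀ x ^ 2 * d x ^ 2 / deriv B₀ x)
          =ᶠ[nhds ψ] fun x => (x - φ₀) ^ m * g x := by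
        filter_upwards [hOpen.mem_nhds hbψ] with x hx using hFeq x hx
      rw [hev.deriv_eq]
      have hBψ : HasDerivAt B₀ (deriv B₀ ψ) ψ := (hB₀.differentiable one_ne_zero ψ).hasDerivAt
      have heψ : HasDerivAt e (deriv e ψ) ψ := (he.differentiable one_ne_zero ψ).hasDerivAt
      have hbψ' : HasDerivAt b (deriv b ψ) ψ := (hb.differentiable one_ne_zero ψ).hasDerivAt
      have hN : HasDerivAt (fun x => B₀ x ^ 2 * e x ^ 2)
          ((2 : ℝ) * B₀ ψ ^ 1 * deriv B₀ ψ * e ψ ^ 2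
            + B₀ ψ ^ 2 * ((2 : ℝ) * e ψ ^ 1 * deriv e ψ)) ψ := by
        have := (hBψ.fun_pow 2).fun_mul (heψ.fun_pow 2)
        exact this.congr_deriv (by norm_num)
      have hgψ : HasDerivAt g (Dg ψ) ψ := hN.div hbψ' hbψ
      have hpow : HasDerivAt (fun x : ℝ => (x - φ₀) ^ m)
          ((m : ℝ) * (ψ - φ₀) ^ (m - 1)) ψ := by
        have := ((hasDerivAt_id ψ).sub_const φ₀).pow m
        simp only [id_eq, mul_one] at this
        exact this
      have hh := hpow.fun_mul hgψ
      rw [hh.deriv]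
      have hsplit : (ψ - φ₀) ^ m = (ψ - φ₀) ^ (m - 1) * (ψ - φ₀) := by
        rw [← pow_succ, Nat.sub_add_cancel (by omega : 1 ≤ m)]
      rw [hsplit, hP]
      ring
    -- continuity and positivity of b φ₀ * P near φ₀
    have hPc : ContinuousAt P φ₀ := by
      have h1 : ContinuousAt g φ₀ :=
        ContinuousAt.div (by fun_prop) hbc.continuousAt hbφ₀
      have h2 : ContinuousAt Dg φ₀ :=
        ContinuousAt.div (by fun_prop) (by fun_prop) (pow_ne_zero 2 hbφ₀)
      exact (continuousAt_const.mul h1).add ((by fun_prop : ContinuousAt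
        (fun x : ℝ => x - φ₀) φ₀).mul h2)
    have hP0 : 0 < b φ₀ * P φ₀ := by
      have : b φ₀ * P φ₀ = (m : ℝ) * (B₀ φ₀ ^ 2 * e φ₀ ^ 2) := by
        simp only [hP, hg, sub_self, zero_mul, add_zero]
        field_simp
      rw [this]
      have hm0 : (0 : ℝ) < m := by positivity
      positivity
    have hevP : ∀ᶠ x in nhds φ₀, 0 < b φ₀ * P x ∧ b x ≠ 0 := by
      have hc : ContinuousAt (fun x => b φ₀ * P x) φ₀ := continuousAt_const.mul hPc
      exact (hc.eventually (eventually_gt_nhds hP0)).and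
        (hbc.continuousAt.eventually_ne hbφ₀)
    rcases Metric.eventually_nhds_iff.mp hevP with ⟨δ, hδ0, hδ⟩
    refine ⟨δ, hδ0, fun φ hφ1 hφ2 => ?_⟩
    have hdist : dist φ φ₀ < δ := by rwa [Real.dist_eq]
    obtain ⟨hPpos, hbφ⟩ := hδ hdist
    have hne : φ - φ₀ ≠ 0 := by
      intro h; rw [h] at hφ1; simp at hφ1
    have heven : 0 < (φ - φ₀) ^ (m - 1) := by
      have : Even (m - 1) := by rw [hm]; exact ⟨v - k, by omega⟩
      exact this.pow_pos hne
    rw [hT, hderiv φ hbφ]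
    calc (0 : ℝ) < 1/4 * ((φ - φ₀) ^ (m - 1) * (b φ₀ * P φ)) := by positivity
      _ = b φ₀ * (1/4 * ((φ - φ₀) ^ (m - 1) * P φ)) := by ring
  constructor
  · intro hpos
    obtain ⟨δ, hδ0, hδ⟩ := key (ne_of_gt hpos)
    refine ⟨δ, hδ0, fun φ h1 h2 => ?_⟩
    have := hδ φ h1 h2
    nlinarith
  · intro hneg
    obtain ⟨δ, hδ0, hδ⟩ := key (ne_of_lt hneg)
    refine ⟨δ, hδ0, fun φ h1 h2 => ?_⟩
    have := hδ φ h1 h2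
    nlinarith
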